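/- arXiv:0710.5926 — 2 statements merged into one kernel-verified Lean document; each statement's English description precedes it below -/
import Mathlib

section
/- Let A = 𝔽₂[x₄,x₆,x₇,x₁₆,x₂₄] graded with |x_i| = i, and consider the subalgebra map i* : A → 𝔽₂[w₄,w₆,w₇,w₈,e₁₆] determined by x₄ ↦ w₄, x₆ ↦ w₆, x₇ ↦ w₇, x₁₆ ↦ e₁₆ + w₈², x₂₄ ↦ w₈e₁₆. Then i* is an injective ring homomorphism. -/
open MvPolynomial

namespace Stmt11

/-- Target: 𝔽₂[w₄,w₆,w₇,w₈,e₁₆] = H*(BSpin(9); ℤ/2), variables X0,…,X4. -/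
noncomputable abbrev Q := MvPolynomial (Fin 5) (ZMod 2)

noncomputable abbrev w₄ : Q := X 0
noncomputable abbrev w₆ : Q := X 1
noncomputable abbrev w₇ : Q := X 2
noncomputable abbrev w₈ : Q := X 3
noncomputable abbrev e₁₆ : Q := X 4

/-- The restriction map i* : H*(BF₄;ℤ/2) = 𝔽₂[x₄,x₆,x₇,x₁₆,x₂₄] → H*(BSpin(9);ℤ/2),
x₄ ↦ w₄, x₆ ↦ w₆, x₇ ↦ w₇, x₁₆ ↦ e₁₆ + w₈², x₂₄ ↦ w₈e₁₆. -/
noncomputable abbrev iStar : MvPolynomial (Fin 5) (ZMod 2) →ₐ[ZMod 2] Q :=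
  aeval ![w₄, w₆, w₇, e₁₆ + w₈ ^ 2, w₈ * e₁₆]

/-- The restriction map i* is an injective ring homomorphism. -/
theorem stmt_11 : Function.Injective ⇑iStar := by
  classical
  set K := FractionRing Q with hK
  set c3 : K := algebraMap Q K (X 3) with hc3
  set c4 : K := algebraMap Q K (X 4) with hc4
  set f : Polynomial K := Polynomial.X ^ 3 + Polynomial.C c3 * Polynomial.X + Polynomial.C c4
    with hf
  have hdeg : f.degree = 3 := by
    rw [hf]; compute_degree!
  haveI : Nontrivial (AdjoinRoot f) := AdjoinRoot.nontrivial f (by rw [hdeg]; decide)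
  set L := AdjoinRoot f with hL
  set a : L := AdjoinRoot.root f with ha
  set k : Q →+* L := (AdjoinRoot.of f).comp (algebraMap Q K) with hk
  set ψ : Q →+* L :=
    eval₂Hom (k.comp (C : ZMod 2 →+* Q)) ![k (X 0), k (X 1), k (X 2), a, k (X 3) + a ^ 2]
    with hψ
  have h2 : (2 : L) = 0 := by
    have h2Q : (2 : Q) = 0 := by
      have : ((2 : ℕ) : Q) = 0 := CharP.cast_eq_zero Q 2
      exact_mod_cast this
    calc (2 : L) = k (2 : Q) := by rw [map_ofNat]
    _ = 0 := by rw [h2Q, map_zero]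
  have hroot : a ^ 3 + k (X 3) * a + k (X 4) = 0 := by
    have := AdjoinRoot.eval₂_root f
    rw [hf] at this
    simpa [hk, hc3, hc4, ha] using this
  have psi0 : ψ (X 0) = k (X 0) := by simp [hψ]
  have psi1 : ψ (X 1) = k (X 1) := by simp [hψ]
  have psi2 : ψ (X 2) = k (X 2) := by simp [hψ]
  have psi3 : ψ (X 3) = a := by simp [hψ]
  have psi4 : ψ (X 4) = k (X 3) + a ^ 2 := by simp [hψ]
  have e0 : ψ (iStar (X 0)) = k (X 0) := by
    rw [show iStar (X 0) = X 0 from by simp, psi0]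
  have e1 : ψ (iStar (X 1)) = k (X 1) := by
    rw [show iStar (X 1) = X 1 from by simp, psi1]
  have e2 : ψ (iStar (X 2)) = k (X 2) := by
    rw [show iStar (X 2) = X 2 from by simp, psi2]
  have e3 : ψ (iStar (X 3)) = k (X 3) := by
    rw [show iStar (X 3) = X 4 + X 3 ^ 2 from by simp, map_add, map_pow, psi3, psi4]
    linear_combination a ^ 2 * h2
  have e4 : ψ (iStar (X 4)) = k (X 4) := by
    rw [show iStar (X 4) = X 3 * X 4 from by simp, map_mul, psi3, psi4]
    linear_combination hroot - k (X 4) * h2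
  have hcomp : ψ.comp (iStar : Q →+* Q) = k := by
    apply MvPolynomial.ringHom_ext
    · intro r
      simp [hψ]
    · intro i
      fin_cases i
      · exact e0
      · exact e1
      · exact e2
      · exact e3
      · exact e4
  have hkinj : Function.Injective k := by
    refine (RingHom.injective (AdjoinRoot.of f)).comp ?_
    exact IsFractionRing.injective Q K
  have hc : ∀ p : Q, ψ (iStar p) = k p := fun p => DFunLike.congr_fun hcomp p
  intro p q h
  apply hkinj
  rw [← hc p, ← hc q, h]

end Stmt11
end

section
/- Let H = 𝔽₂[v₄,v₆,v₇,v₈,y₃,y₅,y₇]/I with I generated by y₅² + y₃²v₄ + y₃v₇, y₃⁴ + y₃²v₆ + y₅v₇, y₇² + y₃²v₈ + y₇v₇. Then H is a free module over the polynomial subring 𝔽₂[v₄,v₆,v₇,v₈] with basis the 16 monomials y₃^{a}y₅^{b}y₇^{c}·(y₃²)^{d} with a,b,c,d ∈ {0,1}—equivalently, the monomials y₃^{a'}y₅^{b}y₇^{c} with 0 ≤ a' ≤ 3 and b, c ∈ {0,1}. -/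
open MvPolynomial

namespace Stmt13

noncomputable abbrev P := MvPolynomial (Fin 7) (ZMod 2)

/-- Relations ideal of H*(BLSpin(7); ℤ/2); variables: v₄,v₆,v₇,v₈,y₃,y₅,y₇ = X0,…,X6. -/
noncomputable abbrev I : Ideal P :=
  Ideal.span {(X 5 : P) ^ 2 + (X 4) ^ 2 * X 0 + X 4 * X 2,
              (X 4 : P) ^ 4 + (X 4) ^ 2 * X 1 + X 5 * X 2,
              (X 6 : P) ^ 2 + (X 4) ^ 2 * X 3 + X 6 * X 2}

noncomputable abbrev H := P ⧸ I

noncomputable abbrev y₃ : H := Ideal.Quotient.mk I (X 4)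
noncomputable abbrev y₅ : H := Ideal.Quotient.mk I (X 5)
noncomputable abbrev y₇ : H := Ideal.Quotient.mk I (X 6)

/-- The polynomial subring 𝔽₂[v₄,v₆,v₇,v₈]. -/
noncomputable abbrev B := MvPolynomial (Fin 4) (ZMod 2)

/-- 𝔽₂[v₄,v₆,v₇,v₈] → H sending the generators to v₄, v₆, v₇, v₈. -/
noncomputable abbrev φ : B →ₐ[ZMod 2] H :=
  aeval ![Ideal.Quotient.mk I (X 0), Ideal.Quotient.mk I (X 1),
          Ideal.Quotient.mk I (X 2), Ideal.Quotient.mk I (X 3)]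

/-- H as a module over the polynomial subring 𝔽₂[v₄,v₆,v₇,v₈]. -/
noncomputable instance : Module B H := φ.toRingHom.toModule


set_option synthInstance.maxHeartbeats 1000000
set_option maxHeartbeats 4000000

noncomputable def v4 : H := Ideal.Quotient.mk I (X 0)
noncomputable def v6 : H := Ideal.Quotient.mk I (X 1)
noncomputable def v7 : H := Ideal.Quotient.mk I (X 2)
noncomputable def v8 : H := Ideal.Quotient.mk I (X 3)

lemma smul_def (b : B) (h : H) : b • h = φ b * h := rfl

lemma φX0 : φ (X 0) = v4 := by simp [v4]
lemma φX1 : φ (X 1) = v6 := by simp [v6]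
lemma φX2 : φ (X 2) = v7 := by simp [v7]
lemma φX3 : φ (X 3) = v8 := by simp [v8]

lemma hg1 : y₅ ^ 2 + y₃ ^ 2 * v4 + y₃ * v7 = 0 := by
  have h : Ideal.Quotient.mk I ((X 5 : P) ^ 2 + (X 4) ^ 2 * X 0 + X 4 * X 2) = 0 :=
    Ideal.Quotient.eq_zero_iff_mem.mpr (Ideal.subset_span (by simp))
  simpa [map_add, map_mul, map_pow, v4, v7] using h

lemma hg2 : y₃ ^ 4 + y₃ ^ 2 * v6 + y₅ * v7 = 0 := by
  have h : Ideal.Quotient.mk I ((X 4 : P) ^ 4 + (X 4) ^ 2 * X 1 + X 5 * X 2) = 0 :=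
    Ideal.Quotient.eq_zero_iff_mem.mpr (Ideal.subset_span (by simp))
  simpa [map_add, map_mul, map_pow, v6, v7] using h

lemma hg3 : y₇ ^ 2 + y₃ ^ 2 * v8 + y₇ * v7 = 0 := by
  have h : Ideal.Quotient.mk I ((X 6 : P) ^ 2 + (X 4) ^ 2 * X 3 + X 6 * X 2) = 0 :=
    Ideal.Quotient.eq_zero_iff_mem.mpr (Ideal.subset_span (by simp))
  simpa [map_add, map_mul, map_pow, v8, v7] using h

noncomputable def mFam : Fin 4 × Fin 2 × Fin 2 → H :=
  fun p => y₃ ^ (p.1 : ℕ) * y₅ ^ (p.2.1 : ℕ) * y₇ ^ (p.2.2 : ℕ)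

@[simp] lemma cva2 : ((2 : Fin 4) : ℕ) = 2 := rfl
@[simp] lemma cva3 : ((3 : Fin 4) : ℕ) = 3 := rfl

noncomputable abbrev S : Submodule B H := Submodule.span B (Set.range mFam)

lemma stab_y3 : ∀ p : Fin 4 × Fin 2 × Fin 2, y₃ * mFam p ∈ S := by
  intro p
  obtain ⟨a, b, c⟩ := p
  fin_cases a <;> fin_cases b <;> fin_cases c
  · show y₃ * mFam (0, 0, 0) ∈ S
    exact Submodule.subset_span ⟨(1, 0, 0), by simp [mFam]; try ring⟩
  · show y₃ * mFam (0, 0, 1) ∈ S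
    exact Submodule.subset_span ⟨(1, 0, 1), by simp [mFam]; try ring⟩
  · show y₃ * mFam (0, 1, 0) ∈ S
    exact Submodule.subset_span ⟨(1, 1, 0), by simp [mFam]; try ring⟩
  · show y₃ * mFam (0, 1, 1) ∈ S
    exact Submodule.subset_span ⟨(1, 1, 1), by simp [mFam]; try ring⟩
  · show y₃ * mFam (1, 0, 0) ∈ S
    exact Submodule.subset_span ⟨(2, 0, 0), by simp [mFam]; try ring⟩
  · show y₃ * mFam (1, 0, 1) ∈ S
    exact Submodule.subset_span ⟨(2, 0, 1), by simp [mFam]; try ring⟩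
  · show y₃ * mFam (1, 1, 0) ∈ S
    exact Submodule.subset_span ⟨(2, 1, 0), by simp [mFam]; try ring⟩
  · show y₃ * mFam (1, 1, 1) ∈ S
    exact Submodule.subset_span ⟨(2, 1, 1), by simp [mFam]; try ring⟩
  · show y₃ * mFam (2, 0, 0) ∈ S
    exact Submodule.subset_span ⟨(3, 0, 0), by simp [mFam]; try ring⟩
  · show y₃ * mFam (2, 0, 1) ∈ S
    exact Submodule.subset_span ⟨(3, 0, 1), by simp [mFam]; try ring⟩
  · show y₃ * mFam (2, 1, 0) ∈ S
    exact Submodule.subset_span ⟨(3, 1, 0), by simp [mFam]; try ring⟩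
  · show y₃ * mFam (2, 1, 1) ∈ S
    exact Submodule.subset_span ⟨(3, 1, 1), by simp [mFam]; try ring⟩
  · show y₃ * mFam (3, 0, 0) ∈ S
    have e : y₃ * mFam (3, 0, 0) = ((-(X 1) : B)) • mFam (2, 0, 0) + ((-(X 2) : B)) • mFam (0, 1, 0) := by
      simp only [mFam, smul_def, map_mul, map_pow, map_neg, map_one, φX0, φX1, φX2, φX3]
      norm_num
      linear_combination (1) * hg2
    rw [e]
    exact (add_mem (Submodule.smul_mem _ _ (Submodule.subset_span ⟨(2, 0, 0), rfl⟩)) (Submodule.smul_mem _ _ (Submodule.subset_span ⟨(0, 1, 0), rfl⟩)))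
  · show y₃ * mFam (3, 0, 1) ∈ S
    have e : y₃ * mFam (3, 0, 1) = ((-(X 1) : B)) • mFam (2, 0, 1) + ((-(X 2) : B)) • mFam (0, 1, 1) := by
      simp only [mFam, smul_def, map_mul, map_pow, map_neg, map_one, φX0, φX1, φX2, φX3]
      norm_num
      linear_combination (y₇) * hg2
    rw [e]
    exact (add_mem (Submodule.smul_mem _ _ (Submodule.subset_span ⟨(2, 0, 1), rfl⟩)) (Submodule.smul_mem _ _ (Submodule.subset_span ⟨(0, 1, 1), rfl⟩)))
  · show y₃ * mFam (3, 1, 0) ∈ S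
    have e : y₃ * mFam (3, 1, 0) = ((-(X 1) : B)) • mFam (2, 1, 0) + ((X 0 * X 2 : B)) • mFam (2, 0, 0) + ((X 2 ^ 2 : B)) • mFam (1, 0, 0) := by
      simp only [mFam, smul_def, map_mul, map_pow, map_neg, map_one, φX0, φX1, φX2, φX3]
      norm_num
      linear_combination ((-1 : H) * (v7)) * hg1 + (y₅) * hg2
    rw [e]
    exact (add_mem (add_mem (Submodule.smul_mem _ _ (Submodule.subset_span ⟨(2, 1, 0), rfl⟩)) (Submodule.smul_mem _ _ (Submodule.subset_span ⟨(2, 0, 0), rfl⟩))) (Submodule.smul_mem _ _ (Submodule.subset_span ⟨(1, 0, 0), rfl⟩)))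
  · show y₃ * mFam (3, 1, 1) ∈ S
    have e : y₃ * mFam (3, 1, 1) = ((-(X 1) : B)) • mFam (2, 1, 1) + ((X 0 * X 2 : B)) • mFam (2, 0, 1) + ((X 2 ^ 2 : B)) • mFam (1, 0, 1) := by
      simp only [mFam, smul_def, map_mul, map_pow, map_neg, map_one, φX0, φX1, φX2, φX3]
      norm_num
      linear_combination ((-1 : H) * (v7 * y₇)) * hg1 + (y₅ * y₇) * hg2
    rw [e]
    exact (add_mem (add_mem (Submodule.smul_mem _ _ (Submodule.subset_span ⟨(2, 1, 1), rfl⟩)) (Submodule.smul_mem _ _ (Submodule.subset_span ⟨(2, 0, 1), rfl⟩))) (Submodule.smul_mem _ _ (Submodule.subset_span ⟨(1, 0, 1), rfl⟩)))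

lemma stab_y5 : ∀ p : Fin 4 × Fin 2 × Fin 2, y₅ * mFam p ∈ S := by
  intro p
  obtain ⟨a, b, c⟩ := p
  fin_cases a <;> fin_cases b <;> fin_cases c
  · show y₅ * mFam (0, 0, 0) ∈ S
    exact Submodule.subset_span ⟨(0, 1, 0), by simp [mFam]; try ring⟩
  · show y₅ * mFam (0, 0, 1) ∈ S
    exact Submodule.subset_span ⟨(0, 1, 1), by simp [mFam]; try ring⟩
  · show y₅ * mFam (0, 1, 0) ∈ S
    have e : y₅ * mFam (0, 1, 0) = ((-(X 0) : B)) • mFam (2, 0, 0) + ((-(X 2) : B)) • mFam (1, 0, 0) := by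
      simp only [mFam, smul_def, map_mul, map_pow, map_neg, map_one, φX0, φX1, φX2, φX3]
      norm_num
      linear_combination (1) * hg1
    rw [e]
    exact (add_mem (Submodule.smul_mem _ _ (Submodule.subset_span ⟨(2, 0, 0), rfl⟩)) (Submodule.smul_mem _ _ (Submodule.subset_span ⟨(1, 0, 0), rfl⟩)))
  · show y₅ * mFam (0, 1, 1) ∈ S
    have e : y₅ * mFam (0, 1, 1) = ((-(X 0) : B)) • mFam (2, 0, 1) + ((-(X 2) : B)) • mFam (1, 0, 1) := by
      simp only [mFam, smul_def, map_mul, map_pow, map_neg, map_one, φX0, φX1, φX2, φX3]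
      norm_num
      linear_combination (y₇) * hg1
    rw [e]
    exact (add_mem (Submodule.smul_mem _ _ (Submodule.subset_span ⟨(2, 0, 1), rfl⟩)) (Submodule.smul_mem _ _ (Submodule.subset_span ⟨(1, 0, 1), rfl⟩)))
  · show y₅ * mFam (1, 0, 0) ∈ S
    exact Submodule.subset_span ⟨(1, 1, 0), by simp [mFam]; try ring⟩
  · show y₅ * mFam (1, 0, 1) ∈ S
    exact Submodule.subset_span ⟨(1, 1, 1), by simp [mFam]; try ring⟩
  · show y₅ * mFam (1, 1, 0) ∈ S
    have e : y₅ * mFam (1, 1, 0) = ((-(X 0) : B)) • mFam (3, 0, 0) + ((-(X 2) : B)) • mFam (2, 0, 0) := by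
      simp only [mFam, smul_def, map_mul, map_pow, map_neg, map_one, φX0, φX1, φX2, φX3]
      norm_num
      linear_combination (y₃) * hg1
    rw [e]
    exact (add_mem (Submodule.smul_mem _ _ (Submodule.subset_span ⟨(3, 0, 0), rfl⟩)) (Submodule.smul_mem _ _ (Submodule.subset_span ⟨(2, 0, 0), rfl⟩)))
  · show y₅ * mFam (1, 1, 1) ∈ S
    have e : y₅ * mFam (1, 1, 1) = ((-(X 0) : B)) • mFam (3, 0, 1) + ((-(X 2) : B)) • mFam (2, 0, 1) := by
      simp only [mFam, smul_def, map_mul, map_pow, map_neg, map_one, φX0, φX1, φX2, φX3]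
      norm_num
      linear_combination (y₃ * y₇) * hg1
    rw [e]
    exact (add_mem (Submodule.smul_mem _ _ (Submodule.subset_span ⟨(3, 0, 1), rfl⟩)) (Submodule.smul_mem _ _ (Submodule.subset_span ⟨(2, 0, 1), rfl⟩)))
  · show y₅ * mFam (2, 0, 0) ∈ S
    exact Submodule.subset_span ⟨(2, 1, 0), by simp [mFam]; try ring⟩
  · show y₅ * mFam (2, 0, 1) ∈ S
    exact Submodule.subset_span ⟨(2, 1, 1), by simp [mFam]; try ring⟩
  · show y₅ * mFam (2, 1, 0) ∈ S
    have e : y₅ * mFam (2, 1, 0) = ((-(X 2) : B)) • mFam (3, 0, 0) + ((X 0 * X 1 : B)) • mFam (2, 0, 0) + ((X 0 * X 2 : B)) • mFam (0, 1, 0) := by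
      simp only [mFam, smul_def, map_mul, map_pow, map_neg, map_one, φX0, φX1, φX2, φX3]
      norm_num
      linear_combination (y₃ ^ 2) * hg1 + ((-1 : H) * (v4)) * hg2
    rw [e]
    exact (add_mem (add_mem (Submodule.smul_mem _ _ (Submodule.subset_span ⟨(3, 0, 0), rfl⟩)) (Submodule.smul_mem _ _ (Submodule.subset_span ⟨(2, 0, 0), rfl⟩))) (Submodule.smul_mem _ _ (Submodule.subset_span ⟨(0, 1, 0), rfl⟩)))
  · show y₅ * mFam (2, 1, 1) ∈ S
    have e : y₅ * mFam (2, 1, 1) = ((-(X 2) : B)) • mFam (3, 0, 1) + ((X 0 * X 1 : B)) • mFam (2, 0, 1) + ((X 0 * X 2 : B)) • mFam (0, 1, 1) := by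
      simp only [mFam, smul_def, map_mul, map_pow, map_neg, map_one, φX0, φX1, φX2, φX3]
      norm_num
      linear_combination (y₃ ^ 2 * y₇) * hg1 + ((-1 : H) * (v4 * y₇)) * hg2
    rw [e]
    exact (add_mem (add_mem (Submodule.smul_mem _ _ (Submodule.subset_span ⟨(3, 0, 1), rfl⟩)) (Submodule.smul_mem _ _ (Submodule.subset_span ⟨(2, 0, 1), rfl⟩))) (Submodule.smul_mem _ _ (Submodule.subset_span ⟨(0, 1, 1), rfl⟩)))
  · show y₅ * mFam (3, 0, 0) ∈ S
    exact Submodule.subset_span ⟨(3, 1, 0), by simp [mFam]; try ring⟩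
  · show y₅ * mFam (3, 0, 1) ∈ S
    exact Submodule.subset_span ⟨(3, 1, 1), by simp [mFam]; try ring⟩
  · show y₅ * mFam (3, 1, 0) ∈ S
    have e : y₅ * mFam (3, 1, 0) = ((X 0 * X 1 : B)) • mFam (3, 0, 0) + ((X 0 * X 2 : B)) • mFam (1, 1, 0) + ((X 1 * X 2 : B)) • mFam (2, 0, 0) + ((X 2 ^ 2 : B)) • mFam (0, 1, 0) := by
      simp only [mFam, smul_def, map_mul, map_pow, map_neg, map_one, φX0, φX1, φX2, φX3]
      norm_num
      linear_combination (y₃ ^ 3) * hg1 + ((-1 : H) * (v4 * y₃) + (-1 : H) * (v7)) * hg2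
    rw [e]
    exact (add_mem (add_mem (add_mem (Submodule.smul_mem _ _ (Submodule.subset_span ⟨(3, 0, 0), rfl⟩)) (Submodule.smul_mem _ _ (Submodule.subset_span ⟨(1, 1, 0), rfl⟩))) (Submodule.smul_mem _ _ (Submodule.subset_span ⟨(2, 0, 0), rfl⟩))) (Submodule.smul_mem _ _ (Submodule.subset_span ⟨(0, 1, 0), rfl⟩)))
  · show y₅ * mFam (3, 1, 1) ∈ S
    have e : y₅ * mFam (3, 1, 1) = ((X 0 * X 1 : B)) • mFam (3, 0, 1) + ((X 0 * X 2 : B)) • mFam (1, 1, 1) + ((X 1 * X 2 : B)) • mFam (2, 0, 1) + ((X 2 ^ 2 : B)) • mFam (0, 1, 1) := by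
      simp only [mFam, smul_def, map_mul, map_pow, map_neg, map_one, φX0, φX1, φX2, φX3]
      norm_num
      linear_combination (y₃ ^ 3 * y₇) * hg1 + ((-1 : H) * (v4 * y₃ * y₇) + (-1 : H) * (v7 * y₇)) * hg2
    rw [e]
    exact (add_mem (add_mem (add_mem (Submodule.smul_mem _ _ (Submodule.subset_span ⟨(3, 0, 1), rfl⟩)) (Submodule.smul_mem _ _ (Submodule.subset_span ⟨(1, 1, 1), rfl⟩))) (Submodule.smul_mem _ _ (Submodule.subset_span ⟨(2, 0, 1), rfl⟩))) (Submodule.smul_mem _ _ (Submodule.subset_span ⟨(0, 1, 1), rfl⟩)))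

lemma stab_y7 : ∀ p : Fin 4 × Fin 2 × Fin 2, y₇ * mFam p ∈ S := by
  intro p
  obtain ⟨a, b, c⟩ := p
  fin_cases a <;> fin_cases b <;> fin_cases c
  · show y₇ * mFam (0, 0, 0) ∈ S
    exact Submodule.subset_span ⟨(0, 0, 1), by simp [mFam]; try ring⟩
  · show y₇ * mFam (0, 0, 1) ∈ S
    have e : y₇ * mFam (0, 0, 1) = ((-(X 3) : B)) • mFam (2, 0, 0) + ((-(X 2) : B)) • mFam (0, 0, 1) := by
      simp only [mFam, smul_def, map_mul, map_pow, map_neg, map_one, φX0, φX1, φX2, φX3]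
      norm_num
      linear_combination (1) * hg3
    rw [e]
    exact (add_mem (Submodule.smul_mem _ _ (Submodule.subset_span ⟨(2, 0, 0), rfl⟩)) (Submodule.smul_mem _ _ (Submodule.subset_span ⟨(0, 0, 1), rfl⟩)))
  · show y₇ * mFam (0, 1, 0) ∈ S
    exact Submodule.subset_span ⟨(0, 1, 1), by simp [mFam]; try ring⟩
  · show y₇ * mFam (0, 1, 1) ∈ S
    have e : y₇ * mFam (0, 1, 1) = ((-(X 3) : B)) • mFam (2, 1, 0) + ((-(X 2) : B)) • mFam (0, 1, 1) := by
      simp only [mFam, smul_def, map_mul, map_pow, map_neg, map_one, φX0, φX1, φX2, φX3]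
      norm_num
      linear_combination (y₅) * hg3
    rw [e]
    exact (add_mem (Submodule.smul_mem _ _ (Submodule.subset_span ⟨(2, 1, 0), rfl⟩)) (Submodule.smul_mem _ _ (Submodule.subset_span ⟨(0, 1, 1), rfl⟩)))
  · show y₇ * mFam (1, 0, 0) ∈ S
    exact Submodule.subset_span ⟨(1, 0, 1), by simp [mFam]; try ring⟩
  · show y₇ * mFam (1, 0, 1) ∈ S
    have e : y₇ * mFam (1, 0, 1) = ((-(X 3) : B)) • mFam (3, 0, 0) + ((-(X 2) : B)) • mFam (1, 0, 1) := by
      simp only [mFam, smul_def, map_mul, map_pow, map_neg, map_one, φX0, φX1, φX2, φX3]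
      norm_num
      linear_combination (y₃) * hg3
    rw [e]
    exact (add_mem (Submodule.smul_mem _ _ (Submodule.subset_span ⟨(3, 0, 0), rfl⟩)) (Submodule.smul_mem _ _ (Submodule.subset_span ⟨(1, 0, 1), rfl⟩)))
  · show y₇ * mFam (1, 1, 0) ∈ S
    exact Submodule.subset_span ⟨(1, 1, 1), by simp [mFam]; try ring⟩
  · show y₇ * mFam (1, 1, 1) ∈ S
    have e : y₇ * mFam (1, 1, 1) = ((-(X 3) : B)) • mFam (3, 1, 0) + ((-(X 2) : B)) • mFam (1, 1, 1) := by
      simp only [mFam, smul_def, map_mul, map_pow, map_neg, map_one, φX0, φX1, φX2, φX3]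
      norm_num
      linear_combination (y₃ * y₅) * hg3
    rw [e]
    exact (add_mem (Submodule.smul_mem _ _ (Submodule.subset_span ⟨(3, 1, 0), rfl⟩)) (Submodule.smul_mem _ _ (Submodule.subset_span ⟨(1, 1, 1), rfl⟩)))
  · show y₇ * mFam (2, 0, 0) ∈ S
    exact Submodule.subset_span ⟨(2, 0, 1), by simp [mFam]; try ring⟩
  · show y₇ * mFam (2, 0, 1) ∈ S
    have e : y₇ * mFam (2, 0, 1) = ((-(X 2) : B)) • mFam (2, 0, 1) + ((X 1 * X 3 : B)) • mFam (2, 0, 0) + ((X 2 * X 3 : B)) • mFam (0, 1, 0) := by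
      simp only [mFam, smul_def, map_mul, map_pow, map_neg, map_one, φX0, φX1, φX2, φX3]
      norm_num
      linear_combination ((-1 : H) * (v8)) * hg2 + (y₃ ^ 2) * hg3
    rw [e]
    exact (add_mem (add_mem (Submodule.smul_mem _ _ (Submodule.subset_span ⟨(2, 0, 1), rfl⟩)) (Submodule.smul_mem _ _ (Submodule.subset_span ⟨(2, 0, 0), rfl⟩))) (Submodule.smul_mem _ _ (Submodule.subset_span ⟨(0, 1, 0), rfl⟩)))
  · show y₇ * mFam (2, 1, 0) ∈ S
    exact Submodule.subset_span ⟨(2, 1, 1), by simp [mFam]; try ring⟩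
  · show y₇ * mFam (2, 1, 1) ∈ S
    have e : y₇ * mFam (2, 1, 1) = ((-(X 2) : B)) • mFam (2, 1, 1) + ((X 1 * X 3 : B)) • mFam (2, 1, 0) + ((-(X 0 * X 2 * X 3) : B)) • mFam (2, 0, 0) + ((-(X 2 ^ 2 * X 3) : B)) • mFam (1, 0, 0) := by
      simp only [mFam, smul_def, map_mul, map_pow, map_neg, map_one, φX0, φX1, φX2, φX3]
      norm_num
      linear_combination (v7 * v8) * hg1 + ((-1 : H) * (v8 * y₅)) * hg2 + (y₃ ^ 2 * y₅) * hg3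
    rw [e]
    exact (add_mem (add_mem (add_mem (Submodule.smul_mem _ _ (Submodule.subset_span ⟨(2, 1, 1), rfl⟩)) (Submodule.smul_mem _ _ (Submodule.subset_span ⟨(2, 1, 0), rfl⟩))) (Submodule.smul_mem _ _ (Submodule.subset_span ⟨(2, 0, 0), rfl⟩))) (Submodule.smul_mem _ _ (Submodule.subset_span ⟨(1, 0, 0), rfl⟩)))
  · show y₇ * mFam (3, 0, 0) ∈ S
    exact Submodule.subset_span ⟨(3, 0, 1), by simp [mFam]; try ring⟩
  · show y₇ * mFam (3, 0, 1) ∈ S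
    have e : y₇ * mFam (3, 0, 1) = ((-(X 2) : B)) • mFam (3, 0, 1) + ((X 1 * X 3 : B)) • mFam (3, 0, 0) + ((X 2 * X 3 : B)) • mFam (1, 1, 0) := by
      simp only [mFam, smul_def, map_mul, map_pow, map_neg, map_one, φX0, φX1, φX2, φX3]
      norm_num
      linear_combination ((-1 : H) * (v8 * y₃)) * hg2 + (y₃ ^ 3) * hg3
    rw [e]
    exact (add_mem (add_mem (Submodule.smul_mem _ _ (Submodule.subset_span ⟨(3, 0, 1), rfl⟩)) (Submodule.smul_mem _ _ (Submodule.subset_span ⟨(3, 0, 0), rfl⟩))) (Submodule.smul_mem _ _ (Submodule.subset_span ⟨(1, 1, 0), rfl⟩)))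
  · show y₇ * mFam (3, 1, 0) ∈ S
    exact Submodule.subset_span ⟨(3, 1, 1), by simp [mFam]; try ring⟩
  · show y₇ * mFam (3, 1, 1) ∈ S
    have e : y₇ * mFam (3, 1, 1) = ((-(X 2) : B)) • mFam (3, 1, 1) + ((X 1 * X 3 : B)) • mFam (3, 1, 0) + ((-(X 0 * X 2 * X 3) : B)) • mFam (3, 0, 0) + ((-(X 2 ^ 2 * X 3) : B)) • mFam (2, 0, 0) := by
      simp only [mFam, smul_def, map_mul, map_pow, map_neg, map_one, φX0, φX1, φX2, φX3]
      norm_num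
      linear_combination (v7 * v8 * y₃) * hg1 + ((-1 : H) * (v8 * y₃ * y₅)) * hg2 + (y₃ ^ 3 * y₅) * hg3
    rw [e]
    exact (add_mem (add_mem (add_mem (Submodule.smul_mem _ _ (Submodule.subset_span ⟨(3, 1, 1), rfl⟩)) (Submodule.smul_mem _ _ (Submodule.subset_span ⟨(3, 1, 0), rfl⟩))) (Submodule.smul_mem _ _ (Submodule.subset_span ⟨(3, 0, 0), rfl⟩))) (Submodule.smul_mem _ _ (Submodule.subset_span ⟨(2, 0, 0), rfl⟩)))



lemma stab (t : H) (ht : ∀ p, t * mFam p ∈ S) : ∀ u ∈ S, t * u ∈ S := by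
  intro u hu
  induction hu using Submodule.span_induction with
  | mem u h => obtain ⟨p, rfl⟩ := h; exact ht p
  | zero => simpa using S.zero_mem
  | add u v _ _ hu hv => rw [mul_add]; exact add_mem hu hv
  | smul b u _ hu =>
      rw [show t * (b • u) = b • (t * u) from by rw [smul_def, smul_def]; ring]
      exact S.smul_mem b hu

lemma mkC_eq (a : ZMod 2) : algebraMap (ZMod 2) H a = Ideal.Quotient.mk I (MvPolynomial.C a) :=
  RingHom.congr_fun (RingHom.ext_zmod (algebraMap (ZMod 2) H)
    ((Ideal.Quotient.mk I).comp MvPolynomial.C)) a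

lemma top_le_S : ⊤ ≤ S := by
  intro u hu
  obtain ⟨p, rfl⟩ := Ideal.Quotient.mk_surjective u
  clear hu
  induction p using MvPolynomial.induction_on with
  | C a =>
      have : (Ideal.Quotient.mk I) (MvPolynomial.C a) = ((MvPolynomial.C a : B)) • mFam (0, 0, 0) := by
        rw [smul_def]
        simp [mFam, ← mkC_eq]
      rw [this]
      exact S.smul_mem _ (Submodule.subset_span ⟨(0, 0, 0), rfl⟩)
  | add p q hp hq => rw [map_add]; exact add_mem hp hq
  | mul_X p n hp =>
      rw [map_mul]
      fin_cases n
      · show Ideal.Quotient.mk I p * Ideal.Quotient.mk I (X 0) ∈ S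
        have e : Ideal.Quotient.mk I p * Ideal.Quotient.mk I (X 0) = (X 0 : B) • Ideal.Quotient.mk I p := by
          rw [smul_def, φX0]; unfold v4; ring
        rw [e]; exact S.smul_mem _ hp
      · show Ideal.Quotient.mk I p * Ideal.Quotient.mk I (X 1) ∈ S
        have e : Ideal.Quotient.mk I p * Ideal.Quotient.mk I (X 1) = (X 1 : B) • Ideal.Quotient.mk I p := by
          rw [smul_def, φX1]; unfold v6; ring
        rw [e]; exact S.smul_mem _ hp
      · show Ideal.Quotient.mk I p * Ideal.Quotient.mk I (X 2) ∈ S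
        have e : Ideal.Quotient.mk I p * Ideal.Quotient.mk I (X 2) = (X 2 : B) • Ideal.Quotient.mk I p := by
          rw [smul_def, φX2]; unfold v7; ring
        rw [e]; exact S.smul_mem _ hp
      · show Ideal.Quotient.mk I p * Ideal.Quotient.mk I (X 3) ∈ S
        have e : Ideal.Quotient.mk I p * Ideal.Quotient.mk I (X 3) = (X 3 : B) • Ideal.Quotient.mk I p := by
          rw [smul_def, φX3]; unfold v8; ring
        rw [e]; exact S.smul_mem _ hp
      · show Ideal.Quotient.mk I p * y₃ ∈ S
        rw [mul_comm]; exact stab y₃ stab_y3 _ hp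
      · show Ideal.Quotient.mk I p * y₅ ∈ S
        rw [mul_comm]; exact stab y₅ stab_y5 _ hp
      · show Ideal.Quotient.mk I p * y₇ ∈ S
        rw [mul_comm]; exact stab y₇ stab_y7 _ hp

noncomputable abbrev K := FractionRing B

noncomputable instance : Field K := inferInstance
noncomputable instance : IsCancelMulZero K := inferInstance
noncomputable instance : Algebra B K := inferInstance
noncomputable instance : Module B K := inferInstance

lemma h2B : (2 : B) = 0 := by
  have := map_ofNat (C : ZMod 2 →+* B) 2
  rw [← this, show (2:ZMod 2) = 0 from rfl, map_zero]
lemma h2K : (2 : K) = 0 := by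
  have := map_ofNat (algebraMap B K) 2
  rw [← this, h2B, map_zero]

noncomputable def vK (i : Fin 4) : K := algebraMap B K (X i)

lemma vK_ne (i : Fin 4) : vK i ≠ 0 := by
  simp only [vK]
  intro h
  exact X_ne_zero i ((map_eq_zero_iff _ (IsFractionRing.injective B K)).mp h)

noncomputable def f : Polynomial K :=
  Polynomial.X ^ 8 + Polynomial.C (vK 1 ^ 2) * Polynomial.X ^ 4
    + Polynomial.C (vK 0 * vK 2 ^ 2) * Polynomial.X ^ 2 + Polynomial.C (vK 2 ^ 3) * Polynomial.X

lemma f_monic : f.Monic := by unfold f; monicity!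
lemma f_natDegree : f.natDegree = 8 := by unfold f; compute_degree!

noncomputable abbrev A2 := AdjoinRoot f
instance : Nontrivial A2 := AdjoinRoot.nontrivial f (by
  rw [Polynomial.degree_eq_natDegree f_monic.ne_zero, f_natDegree]; simp)
noncomputable instance : CommRing A2 := inferInstance
noncomputable instance : Algebra K A2 := inferInstance
noncomputable instance : Module K A2 := inferInstance
noncomputable instance : SMul K A2 := inferInstance

noncomputable def x : A2 := AdjoinRoot.root f
noncomputable def c2 : K →+* A2 := algebraMap K A2

lemma h2A2 : (2 : A2) = 0 := by
  have := map_ofNat c2 2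
  rw [← this, h2K, map_zero]

lemma hx : x ^ 8 + c2 (vK 1) ^ 2 * x ^ 4 + c2 (vK 0) * c2 (vK 2) ^ 2 * x ^ 2
    + c2 (vK 2) ^ 3 * x = 0 := by
  have h : Polynomial.eval₂ (AdjoinRoot.of f) (AdjoinRoot.root f) (Polynomial.X ^ 8 + Polynomial.C (vK 1 ^ 2) * Polynomial.X ^ 4
      + Polynomial.C (vK 0 * vK 2 ^ 2) * Polynomial.X ^ 2 + Polynomial.C (vK 2 ^ 3) * Polynomial.X) = 0 := AdjoinRoot.eval₂_root f
  simp only [Polynomial.eval₂_add, Polynomial.eval₂_mul, Polynomial.eval₂_pow,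
    Polynomial.eval₂_X, Polynomial.eval₂_C] at h
  simpa [x, c2, AdjoinRoot.algebraMap_eq, map_pow, map_mul] using h

noncomputable def t5 : A2 := c2 (vK 2)⁻¹ * (x ^ 4 + c2 (vK 1) * x ^ 2)

lemma hw : c2 (vK 2) * c2 (vK 2)⁻¹ = 1 := by
  rw [← map_mul, mul_inv_cancel₀ (vK_ne 2), map_one]

lemma rel2 : x ^ 4 + c2 (vK 1) * x ^ 2 + c2 (vK 2) * t5 = 0 := by
  unfold t5
  linear_combination (x ^ 4 + c2 (vK 1) * x ^ 2) * hw + (x ^ 4 + c2 (vK 1) * x ^ 2) * h2A2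

lemma rel1 : t5 ^ 2 + c2 (vK 0) * x ^ 2 + c2 (vK 2) * x = 0 := by
  unfold t5
  linear_combination (c2 (vK 2)⁻¹)^2 * hx
    + ((c2 (vK 2) * c2 (vK 2)⁻¹ + 1) * (c2 (vK 0) * x ^ 2 + c2 (vK 2) * x)) * hw
    + (c2 (vK 0) * x ^ 2 + c2 (vK 2) * x
       + c2 (vK 2)⁻¹^2 * (x^6 * c2 (vK 1) - x * c2 (vK 2)^3 - x^2 * c2 (vK 0) * c2 (vK 2)^2)) * h2A2

noncomputable def nFam : Fin 4 × Fin 2 → A2 := fun q => x ^ (q.1 : ℕ) * t5 ^ (q.2 : ℕ)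

noncomputable def pb8 : PowerBasis K A2 := AdjoinRoot.powerBasis' f_monic

lemma smul_c2 (k : K) (a : A2) : k • a = c2 k * a := Algebra.smul_def k a

lemma top_le_span_n : ⊤ ≤ Submodule.span K (Set.range nFam) := by
  rw [← pb8.basis.span_eq]
  refine Submodule.span_le.mpr ?_
  rintro _ ⟨i, rfl⟩
  rw [pb8.basis_eq_pow]
  have hgen : pb8.gen = x := rfl
  rw [hgen]
  have hi : (i : ℕ) < 8 := by
    have := i.isLt
    simp only [pb8, AdjoinRoot.powerBasis'_dim, f_natDegree] at this
    exact this
  interval_cases h : (i : ℕ)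
  · exact Submodule.subset_span ⟨(0, 0), by simp [nFam]⟩
  · exact Submodule.subset_span ⟨(1, 0), by simp [nFam]⟩
  · exact Submodule.subset_span ⟨(2, 0), by simp [nFam, show ((2:Fin 4):ℕ) = 2 from rfl]⟩
  · exact Submodule.subset_span ⟨(3, 0), by simp [nFam, show ((3:Fin 4):ℕ) = 3 from rfl]⟩
  · have e : x ^ 4 = vK 1 • nFam (2, 0) + vK 2 • nFam (0, 1) := by
      simp only [nFam, smul_c2, show ((2:Fin 4):ℕ) = 2 from rfl, show ((0:Fin 4):ℕ) = 0 from rfl,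
        show ((0:Fin 2):ℕ) = 0 from rfl, show ((1:Fin 2):ℕ) = 1 from rfl, show ((3:Fin 4):ℕ) = 3 from rfl, pow_zero, pow_one, one_mul, mul_one]
      linear_combination -rel2 + x^4 * h2A2
    rw [e]
    exact add_mem (Submodule.smul_mem _ _ (Submodule.subset_span ⟨(2,0), rfl⟩))
      (Submodule.smul_mem _ _ (Submodule.subset_span ⟨(0,1), rfl⟩))
  · have e : x ^ 5 = vK 1 • nFam (3, 0) + vK 2 • nFam (1, 1) := by
      simp only [nFam, smul_c2, show ((3:Fin 4):ℕ) = 3 from rfl, show ((1:Fin 4):ℕ) = 1 from rfl,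
        show ((0:Fin 2):ℕ) = 0 from rfl, show ((1:Fin 2):ℕ) = 1 from rfl, pow_zero, pow_one, one_mul, mul_one]
      linear_combination -x * rel2 + x^5 * h2A2
    rw [e]
    exact add_mem (Submodule.smul_mem _ _ (Submodule.subset_span ⟨(3,0), rfl⟩))
      (Submodule.smul_mem _ _ (Submodule.subset_span ⟨(1,1), rfl⟩))
  · have e : x ^ 6 = (vK 1 ^ 2) • nFam (2, 0) + (vK 1 * vK 2) • nFam (0, 1) + vK 2 • nFam (2, 1) := by
      simp only [nFam, smul_c2, show ((2:Fin 4):ℕ) = 2 from rfl, show ((0:Fin 4):ℕ) = 0 from rfl,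
        show ((0:Fin 2):ℕ) = 0 from rfl, show ((1:Fin 2):ℕ) = 1 from rfl, pow_zero, pow_one, one_mul, mul_one, map_mul, map_pow]
      linear_combination (-x^2 - c2 (vK 1)) * rel2 + (x^4 * c2 (vK 1) + x^6) * h2A2
    rw [e]
    exact add_mem (add_mem (Submodule.smul_mem _ _ (Submodule.subset_span ⟨(2,0), rfl⟩))
      (Submodule.smul_mem _ _ (Submodule.subset_span ⟨(0,1), rfl⟩)))
      (Submodule.smul_mem _ _ (Submodule.subset_span ⟨(2,1), rfl⟩))
  · have e : x ^ 7 = (vK 1 ^ 2) • nFam (3, 0) + (vK 1 * vK 2) • nFam (1, 1) + vK 2 • nFam (3, 1) := by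
      simp only [nFam, smul_c2, show ((3:Fin 4):ℕ) = 3 from rfl, show ((1:Fin 4):ℕ) = 1 from rfl,
        show ((0:Fin 2):ℕ) = 0 from rfl, show ((1:Fin 2):ℕ) = 1 from rfl, pow_zero, pow_one, one_mul, mul_one, map_mul, map_pow]
      linear_combination (-x^3 - c2 (vK 1) * x) * rel2 + (x^5 * c2 (vK 1) + x^7) * h2A2
    rw [e]
    exact add_mem (add_mem (Submodule.smul_mem _ _ (Submodule.subset_span ⟨(3,0), rfl⟩))
      (Submodule.smul_mem _ _ (Submodule.subset_span ⟨(1,1), rfl⟩)))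
      (Submodule.smul_mem _ _ (Submodule.subset_span ⟨(3,1), rfl⟩))

noncomputable def bn : Module.Basis (Fin 4 × Fin 2) K A2 :=
  basisOfTopLeSpanOfCardEqFinrank nFam top_le_span_n
    (by rw [pb8.finrank, show pb8.dim = 8 from f_natDegree]; simp)

lemma bn_eq : ⇑bn = nFam := coe_basisOfTopLeSpanOfCardEqFinrank _ _ _

noncomputable def g : Polynomial A2 :=
  Polynomial.X ^ 2 + Polynomial.C (c2 (vK 2)) * Polynomial.X + Polynomial.C (c2 (vK 3) * x ^ 2)
lemma g_monic : g.Monic := by unfold g; monicity!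
lemma g_natDegree : g.natDegree = 2 := by unfold g; compute_degree!

noncomputable abbrev A := AdjoinRoot g
noncomputable instance : CommRing A := inferInstance
noncomputable instance : Algebra A2 A := inferInstance
noncomputable instance : Algebra K A := inferInstance
noncomputable instance : Algebra B A := inferInstance
noncomputable instance : Module K A := inferInstance
noncomputable instance : Module A2 A := inferInstance
noncomputable instance : Module B A := inferInstance
noncomputable instance : IsScalarTower K A2 A := inferInstance
noncomputable instance : IsScalarTower B K A := inferInstance

noncomputable def z : A := AdjoinRoot.root g
noncomputable def jA : A2 →+* A := algebraMap A2 A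

lemma hz : z ^ 2 + jA (c2 (vK 2)) * z + jA (c2 (vK 3)) * jA x ^ 2 = 0 := by
  have h : Polynomial.eval₂ (AdjoinRoot.of g) (AdjoinRoot.root g) (Polynomial.X ^ 2 + Polynomial.C (c2 (vK 2)) * Polynomial.X + Polynomial.C (c2 (vK 3) * x ^ 2)) = 0 := AdjoinRoot.eval₂_root g
  simp only [Polynomial.eval₂_add, Polynomial.eval₂_mul, Polynomial.eval₂_pow,
    Polynomial.eval₂_X, Polynomial.eval₂_C] at h
  simpa [z, jA, AdjoinRoot.algebraMap_eq, map_pow, map_mul] using h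

noncomputable def pb2 : PowerBasis A2 A := AdjoinRoot.powerBasis' g_monic

noncomputable def bA : Module.Basis ((Fin 4 × Fin 2) × Fin pb2.dim) K A := bn.smulTower pb2.basis

-- the 16-monomial family in A
noncomputable def mA : Fin 4 × Fin 2 × Fin 2 → A :=
  fun p => jA x ^ (p.1 : ℕ) * jA t5 ^ (p.2.1 : ℕ) * z ^ (p.2.2 : ℕ)

lemma pb2_dim : pb2.dim = 2 := g_natDegree

noncomputable def eIdx : (Fin 4 × Fin 2 × Fin 2) → ((Fin 4 × Fin 2) × Fin pb2.dim) :=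
  fun p => ((p.1, p.2.1), Fin.cast pb2_dim.symm p.2.2)

lemma eIdx_inj : Function.Injective eIdx := by
  rintro ⟨a, b, c⟩ ⟨a', b', c'⟩ h
  simp only [eIdx, Prod.mk.injEq] at h
  obtain ⟨⟨h1, h2⟩, h3⟩ := h
  exact Prod.ext h1 (Prod.ext h2 (by exact Fin.cast_injective _ h3))

lemma li_mA : LinearIndependent K mA := by
  have h := (bA.linearIndependent).comp eIdx eIdx_inj
  convert h using 1
  funext p
  simp only [Function.comp_apply, bA, Module.Basis.smulTower_apply, bn_eq, eIdx]
  rw [pb2.basis_eq_pow]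
  have : pb2.gen = z := rfl
  rw [this, Algebra.smul_def]
  simp only [nFam, mA, map_mul, map_pow]
  norm_num [jA]

noncomputable def ρ0 : ZMod 2 →+* A :=
  (algebraMap K A).comp ((algebraMap B K).comp (MvPolynomial.C : ZMod 2 →+* B))

noncomputable def vals : Fin 7 → A :=
  ![algebraMap K A (vK 0), algebraMap K A (vK 1), algebraMap K A (vK 2), algebraMap K A (vK 3),
    jA x, jA t5, z]

noncomputable def ψ0 : P →+* A := eval₂Hom ρ0 vals
lemma vals0 : vals 0 = algebraMap K A (vK 0) := rfl
lemma vals1 : vals 1 = algebraMap K A (vK 1) := rfl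
lemma vals2 : vals 2 = algebraMap K A (vK 2) := rfl
lemma vals3 : vals 3 = algebraMap K A (vK 3) := rfl
lemma vals4 : vals 4 = jA x := rfl
lemma vals5 : vals 5 = jA t5 := rfl
lemma vals6 : vals 6 = z := rfl

lemma aKA (k : K) : algebraMap K A k = jA (c2 k) := by
  rw [IsScalarTower.algebraMap_apply K A2 A]; rfl

lemma hker : I ≤ RingHom.ker ψ0 := by
  rw [Ideal.span_le]
  rintro p hp
  simp only [Set.mem_insert_iff, Set.mem_singleton_iff] at hp
  rcases hp with rfl | rfl | rfl <;>
      simp only [SetLike.mem_coe, RingHom.mem_ker, ψ0, map_add, map_mul, map_pow, eval₂Hom_X',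
        vals0, vals1, vals2, vals3, vals4, vals5, vals6, aKA]
  · have := congrArg jA rel1
    simp only [map_add, map_mul, map_pow, map_zero] at this
    linear_combination this
  · have := congrArg jA rel2
    simp only [map_add, map_mul, map_pow, map_zero] at this
    linear_combination this
  · linear_combination hz

noncomputable def ψ : H →+* A := Ideal.Quotient.lift I ψ0 (fun _ hp => hker hp)

lemma ψ_mk (p : P) : ψ (Ideal.Quotient.mk I p) = ψ0 p := rfl


lemma smulBA (b : B) (a : A) : b • a = algebraMap K A (algebraMap B K b) * a := by
  rw [Algebra.smul_def, IsScalarTower.algebraMap_apply B K A]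

lemma hinjBK : Function.Injective fun b : B => b • (1 : K) := by
  have : (fun b : B => b • (1 : K)) = fun b => algebraMap B K b := by
    funext b; rw [Algebra.smul_def, mul_one]
  rw [this]
  exact IsFractionRing.injective B K

lemma liB_mA : LinearIndependent B mA := li_mA.restrict_scalars hinjBK


lemma hcomp : ∀ b : B, ψ (φ b) = algebraMap K A (algebraMap B K b) := by
  have : ψ.comp φ.toRingHom = (algebraMap K A).comp (algebraMap B K) := by
    apply MvPolynomial.ringHom_ext
    · intro r
      exact RingHom.congr_fun (RingHom.ext_zmod (RingHom.comp (ψ.comp φ.toRingHom) MvPolynomial.C)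
        (RingHom.comp ((algebraMap K A).comp (algebraMap B K)) MvPolynomial.C)) r
    · intro i
      fin_cases i <;>
        simp only [RingHom.coe_comp, Function.comp_apply, AlgHom.toRingHom_eq_coe,
          RingHom.coe_coe, aeval_X] <;>
        norm_num <;>
        rw [ψ_mk] <;>
        simp only [ψ0, eval₂Hom_X', vals0, vals1, vals2, vals3] <;>
        rfl
  exact fun b => RingHom.congr_fun this b

noncomputable def ψlin : H →ₗ[B] A where
  toFun := ψ
  map_add' := map_add ψ
  map_smul' := by
    intro b h
    simp only [RingHom.id_apply]
    have h1 : b • h = φ b * h := rfl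
    rw [h1, map_mul, hcomp, smulBA]


lemma hψm : ∀ p, ψ (mFam p) = mA p := by
  intro p
  simp only [mFam, mA, map_mul, map_pow]
  rw [show ψ y₃ = jA x from by rw [ψ_mk]; simp [ψ0, vals4],
      show ψ y₅ = jA t5 from by rw [ψ_mk]; simp [ψ0, vals5],
      show ψ y₇ = z from by rw [ψ_mk]; simp [ψ0, vals6]]

lemma li_mFam : LinearIndependent B mFam :=
  LinearIndependent.of_comp ψlin (by
    have : ⇑ψlin ∘ mFam = mA := funext fun p => hψm p
    rw [this]
    exact liB_mA)

noncomputable def basH : Module.Basis (Fin 4 × Fin 2 × Fin 2) B H := Module.Basis.mk li_mFam top_le_S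

/-- doc -/
theorem stmt_13 :
    ∃ bas : Module.Basis (Fin 4 × Fin 2 × Fin 2) B H,
      ∀ p : Fin 4 × Fin 2 × Fin 2,
        bas p = y₃ ^ (p.1 : ℕ) * y₅ ^ (p.2.1 : ℕ) * y₇ ^ (p.2.2 : ℕ) := by
  exact ⟨basH, fun p => Module.Basis.mk_apply li_mFam top_le_S p⟩

end Stmt13
end
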